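/- Let C be a small category equipped with a Grothendieck topology J, T a small category, and τ : C ⥤ T a functor. Then the forgetful functor U : Mod^T ⥤ Sh(C,J), sending a Linton model M to the J-sheaf c ↦ M(τ c) (and a natural transformation to its whiskering with τ), admits a left adjoint F (the 'free model' functor). -/

import Mathlib

open CategoryTheory CategoryTheory.Limits Opposite

universe u

variable {C : Type u} [SmallCategory C] (J : GrothendieckTopology C)
variable {T : Type u} [SmallCategory T] (τ : C ⥤ T)

/-- The forgetful functor from Linton models of `τ : C ⥤ T` to `J`-sheaves on `C`,
sending a model `M` to the sheaf `c ↦ M (τ c)` and a natural transformation to its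
whiskering with `τ`. -/
def lintonForget :
    ObjectProperty.FullSubcategory (fun M : Tᵒᵖ ⥤ Type u => Presieve.IsSheaf J (τ.op ⋙ M)) ⥤
      Sheaf J (Type u) where
  obj M := ⟨τ.op ⋙ M.obj, (isSheaf_iff_isSheaf_of_type J (τ.op ⋙ M.obj)).mpr M.property⟩
  map f := ⟨Functor.whiskerLeft τ.op f.hom⟩

namespace LintonAux

open scoped Classical

/-- Terms denoting elements of the submodel generated by a family of generators. -/
inductive Term (T : Type u) [SmallCategory T] (X : Cᵒᵖ ⥤ Type u) : Type u
  | gen (c : C) (x : X.obj (op c)) : Term T X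
  | push (t t' : T) (f : t ⟶ t') (l : Term T X) : Term T X
  | amalg (c : C) (S : Sieve c) (fam : ∀ (d : C) (f : d ⟶ c), S.arrows f → Term T X) : Term T X

section

variable {X : Cᵒᵖ ⥤ Type u} {M : Tᵒᵖ ⥤ Type u}

/-- A family of subsets of the values of `M` is *closed* if it is a subpresheaf
containing the image of `h` which is closed under amalgamation of compatible families
over covering sieves. -/
structure IsClosed (J : GrothendieckTopology C) (τ : C ⥤ T) (h : X ⟶ τ.op ⋙ M)
    (A : ∀ t : T, Set (M.obj (op t))) : Prop where
  map_mem : ∀ {t t' : T} (f : t ⟶ t') (y : M.obj (op t')), y ∈ A t' → M.map f.op y ∈ A t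
  gen_mem : ∀ (c : C) (x : X.obj (op c)), h.app (op c) x ∈ A (τ.obj c)
  amalg_mem : ∀ (c : C) (S : Sieve c), S ∈ J c →
    ∀ x : Presieve.FamilyOfElements (τ.op ⋙ M) S.arrows, x.Compatible →
      (∀ (d : C) (f : d ⟶ c) (hf : S.arrows f), x f hf ∈ A (τ.obj d)) →
      ∀ y : M.obj (op (τ.obj c)), x.IsAmalgamation y → y ∈ A (τ.obj c)

/-- The smallest closed family. -/
def gensub (h : X ⟶ τ.op ⋙ M) : ∀ t : T, Set (M.obj (op t)) :=
  fun t => {y | ∀ A, IsClosed J τ h A → y ∈ A t}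

theorem isClosed_gensub (h : X ⟶ τ.op ⋙ M) : IsClosed J τ h (gensub J τ h) where
  map_mem f y hy := fun A hA => hA.map_mem f y (hy A hA)
  gen_mem c x := fun A hA => hA.gen_mem c x
  amalg_mem c S hS x hx hmem y hy := fun A hA =>
    hA.amalg_mem c S hS x hx (fun d f hf => hmem d f hf A hA) y hy

/-- The subpresheaf on the smallest closed family. -/
def gensubPresheaf (h : X ⟶ τ.op ⋙ M) : Tᵒᵖ ⥤ Type u where
  obj t := {y : M.obj t // y ∈ gensub J τ h (unop t)}
  map f := TypeCat.ofHom fun y => ⟨M.map f y.1, (isClosed_gensub J τ h).map_mem f.unop y.1 y.2⟩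
  map_id t := by ext y; simp
  map_comp f g := by ext y; simp

/-- Inclusion of the generated subpresheaf. -/
def gensubIncl (h : X ⟶ τ.op ⋙ M) : gensubPresheaf J τ h ⟶ M where
  app t := TypeCat.ofHom Subtype.val
  naturality _ _ _ := rfl

theorem isSheaf_gensubPresheaf (hM : Presieve.IsSheaf J (τ.op ⋙ M)) (h : X ⟶ τ.op ⋙ M) :
    Presieve.IsSheaf J (τ.op ⋙ gensubPresheaf J τ h) := by
  intro c S hS x hx
  let x' : Presieve.FamilyOfElements (τ.op ⋙ M) S.arrows :=
    x.map (Functor.whiskerLeft τ.op (gensubIncl J τ h))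
  have hx' : x'.Compatible := hx.map _
  have hy := (hM S hS).isAmalgamation hx'
  refine ⟨⟨(hM S hS).amalgamate x' hx',
    (isClosed_gensub J τ h).amalg_mem c S hS x' hx' (fun d f hf => (x f hf).2) _ hy⟩, ?_, ?_⟩
  · intro d f hf
    exact Subtype.ext (hy f hf)
  · rintro ⟨t, ht⟩ hamalg
    refine Subtype.ext (((hM S hS) x' hx').unique ?_ hy)
    intro d f hf
    exact congrArg Subtype.val (hamalg f hf)

/-- The factorization of `h` through the generated submodel. -/
def gensubFactor (h : X ⟶ τ.op ⋙ M) : X ⟶ τ.op ⋙ gensubPresheaf J τ h where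
  app c := TypeCat.ofHom fun x => ⟨h.app c x, (isClosed_gensub J τ h).gen_mem c.unop x⟩
  naturality c c' f := by
    ext x
    exact Subtype.ext (ConcreteCategory.congr_hom (h.naturality f) x :)

theorem gensubFactor_comp (h : X ⟶ τ.op ⋙ M) :
    gensubFactor J τ h ≫ Functor.whiskerLeft τ.op (gensubIncl J τ h) = h := rfl

noncomputable def eval (hM : Presieve.IsSheaf J (τ.op ⋙ M)) (h : X ⟶ τ.op ⋙ M) :
    Term T X → Option (Σ t : T, M.obj (op t))
  | .gen c x => some ⟨τ.obj c, h.app (op c) x⟩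
  | .push t t' f l =>
    (eval hM h l).bind fun p =>
      if e : p.1 = t' then some ⟨t, M.map f.op (cast (congrArg (fun s => M.obj (op s)) e) p.2)⟩
      else none
  | .amalg c S fam =>
    if hS : S ∈ J c ∧ ∃ x : Presieve.FamilyOfElements (τ.op ⋙ M) S.arrows,
        x.Compatible ∧ ∀ (d : C) (f : d ⟶ c) (hf : S.arrows f),
          eval hM h (fam d f hf) = some ⟨τ.obj d, x f hf⟩ then
      some ⟨τ.obj c, (hM S hS.1).amalgamate hS.2.choose hS.2.choose_spec.1⟩
    else none

theorem exists_term (hM : Presieve.IsSheaf J (τ.op ⋙ M)) (h : X ⟶ τ.op ⋙ M) :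
    ∀ (t : T) (y : M.obj (op t)), y ∈ gensub J τ h t →
      ∃ l : Term T X, eval J τ hM h l = some ⟨t, y⟩ := by
  have hA : IsClosed J τ h (fun t => {y | ∃ l, eval J τ hM h l = some ⟨t, y⟩}) := by
    constructor
    · rintro t t' f y ⟨l, hl⟩
      refine ⟨.push t t' f l, ?_⟩
      simp only [eval]
      rw [hl]
      simp
    · intro c x
      exact ⟨.gen c x, rfl⟩
    · intro c S hS x hx hmem y hy
      choose fam hfam using hmem
      have hcond : S ∈ J c ∧ ∃ x' : Presieve.FamilyOfElements (τ.op ⋙ M) S.arrows,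
          x'.Compatible ∧ ∀ (d : C) (f : d ⟶ c) (hf : S.arrows f),
            eval J τ hM h (fam d f hf) = some ⟨τ.obj d, x' f hf⟩ := ⟨hS, x, hx, hfam⟩
      refine ⟨.amalg c S fam, ?_⟩
      simp only [eval]
      rw [dif_pos hcond]
      have key : ∀ (d : C) (f : d ⟶ c) (hf : S.arrows f),
          hcond.2.choose f hf = x f hf := by
        intro d f hf
        have h1 := hcond.2.choose_spec.2 d f hf
        have h2 := hfam d f hf
        simpa using h1.symm.trans h2
      have hamalg : x.IsAmalgamation
          ((hM S hcond.1).amalgamate hcond.2.choose hcond.2.choose_spec.1) := by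
        intro d f hf
        rw [(hM S hcond.1).valid_glue hcond.2.choose_spec.1 f hf]
        exact key d f hf
      exact congrArg some (congrArg (Sigma.mk (τ.obj c)) (((hM S hS) x hx).unique hamalg hy))
  exact fun t y hy => hy _ hA

theorem exists_injection (hM : Presieve.IsSheaf J (τ.op ⋙ M)) (h : X ⟶ τ.op ⋙ M) (t : T) :
    ∃ e : {y : M.obj (op t) // y ∈ gensub J τ h t} → Term T X, Function.Injective e := by
  choose e he using fun y : {y : M.obj (op t) // y ∈ gensub J τ h t} =>
    exists_term J τ hM h t y.1 y.2
  refine ⟨e, fun y₁ y₂ hy => ?_⟩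
  have := (he y₁).symm.trans ((congrArg (eval J τ hM h) hy).trans (he y₂))
  exact Subtype.ext (by simpa using this)

end

/-- Small data for a presheaf on `T` carried by subsets of the type of terms. -/
structure SmallData (T : Type u) [SmallCategory T] (X : Cᵒᵖ ⥤ Type u) : Type u where
  carrier : Tᵒᵖ → Set (Term T X)
  map : ∀ {t t' : Tᵒᵖ}, (t ⟶ t') → carrier t → carrier t'
  map_id : ∀ (t : Tᵒᵖ) (y : carrier t), map (𝟙 t) y = y
  map_comp : ∀ {t t' t'' : Tᵒᵖ} (f : t ⟶ t') (g : t' ⟶ t'') (y : carrier t),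
    map (f ≫ g) y = map g (map f y)

/-- The presheaf associated to `SmallData`. -/
def SmallData.toPresheaf {T : Type u} [SmallCategory T] {X : Cᵒᵖ ⥤ Type u} (d : SmallData T X) : Tᵒᵖ ⥤ Type u where
  obj t := d.carrier t
  map f := TypeCat.ofHom fun y => d.map f y
  map_id t := by ext y; exact congrArg Subtype.val (d.map_id t y)
  map_comp f g := by ext y; exact congrArg Subtype.val (d.map_comp f g y)

/-- Any presheaf on `T` which injects pointwise into the type of terms is isomorphic to the
presheaf of a `SmallData`. -/
noncomputable def transportData {T : Type u} [SmallCategory T] {X : Cᵒᵖ ⥤ Type u} (W : Tᵒᵖ ⥤ Type u)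
    (i : ∀ t : Tᵒᵖ, W.obj t → Term T X) (hi : ∀ t, Function.Injective (i t)) :
    Σ' d : SmallData T X, d.toPresheaf ≅ W := by
  let q : ∀ t, W.obj t ≃ Set.range (i t) := fun t => Equiv.ofInjective _ (hi t)
  refine ⟨⟨fun t => Set.range (i t), fun {t t'} f y => q t' (W.map f ((q t).symm y)),
    fun t y => ?_, fun {t t' t''} f g y => ?_⟩, ?_⟩
  · simp [FunctorToTypes.map_id_apply]
  · simp [FunctorToTypes.map_comp_apply]
  · refine NatIso.ofComponents (fun t => (by exact (q t).symm.toIso)) ?_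
    intro t t' f
    ext y
    exact (q t').symm_apply_apply _

theorem closedUnderLimits {K : Type u} [SmallCategory K] :
    ObjectProperty.IsClosedUnderLimitsOfShape
      (fun M : Tᵒᵖ ⥤ Type u => Presieve.IsSheaf J (τ.op ⋙ M)) K := by
  constructor
  rintro _ ⟨p⟩
  let F := p.diag
  let c : Cone F := Cone.mk _ p.π
  have hc : IsLimit c := p.isLimit
  have hF := p.prop_diag_obj
  let G : K ⥤ Cᵒᵖ ⥤ Type u := F ⋙ (Functor.whiskeringLeft Cᵒᵖ Tᵒᵖ (Type u)).obj τ.op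
  let Gs : K ⥤ Sheaf J (Type u) :=
    { obj := fun k => ⟨G.obj k, (isSheaf_iff_isSheaf_of_type J _).mpr (hF k)⟩
      map := fun f => ObjectProperty.homMk (G.map f)
      map_id := fun k => Sheaf.hom_ext (G.map_id k)
      map_comp := fun f g => Sheaf.hom_ext (G.map_comp f g) }
  let E : Cone (Gs ⋙ sheafToPresheaf J (Type u)) :=
    ⟨(((Functor.whiskeringLeft Cᵒᵖ Tᵒᵖ (Type u)).obj τ.op).mapCone c).pt,
      (((Functor.whiskeringLeft Cᵒᵖ Tᵒᵖ (Type u)).obj τ.op).mapCone c).π⟩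
  have hE : IsLimit E := isLimitOfPreserves ((Functor.whiskeringLeft Cᵒᵖ Tᵒᵖ (Type u)).obj τ.op) hc
  exact (isSheaf_iff_isSheaf_of_type J _).mp (Sheaf.isSheaf_of_isLimit Gs E hE)

instance : HasLimits
    (ObjectProperty.FullSubcategory (fun M : Tᵒᵖ ⥤ Type u => Presieve.IsSheaf J (τ.op ⋙ M))) where
  has_limits_of_shape K _ := by have := closedUnderLimits J τ (K := K); infer_instance

instance : PreservesLimits (ObjectProperty.ι
    (fun M : Tᵒᵖ ⥤ Type u => Presieve.IsSheaf J (τ.op ⋙ M))) := by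
  have : CreatesLimits (ObjectProperty.ι
      (fun M : Tᵒᵖ ⥤ Type u => Presieve.IsSheaf J (τ.op ⋙ M))) :=
    ⟨fun {K} _ => by have := closedUnderLimits J τ (K := K); infer_instance⟩
  infer_instance

instance : PreservesLimits (lintonForget J τ) := by
  have h1 : PreservesLimits (lintonForget J τ ⋙ sheafToPresheaf J (Type u)) := by
    have e : lintonForget J τ ⋙ sheafToPresheaf J (Type u) =
        ObjectProperty.ι (fun M : Tᵒᵖ ⥤ Type u => Presieve.IsSheaf J (τ.op ⋙ M)) ⋙
          (Functor.whiskeringLeft Cᵒᵖ Tᵒᵖ (Type u)).obj τ.op := rfl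
    rw [e]
    infer_instance
  exact preservesLimits_of_reflects_of_preserves (lintonForget J τ) (sheafToPresheaf J (Type u))

/-- The index type for the solution set: models carried by subsets of the type of terms,
equipped with a morphism from `X`. -/
def SolIndex (X : Sheaf J (Type u)) : Type u :=
  Σ' (d : SmallData T X.val) (hd : Presieve.IsSheaf J (τ.op ⋙ d.toPresheaf)),
    (X ⟶ (lintonForget J τ).obj ⟨d.toPresheaf, hd⟩)

theorem solutionSetCondition : SolutionSetCondition.{u} (lintonForget J τ) := by
  intro X
  refine ⟨SolIndex J τ X, fun i => ⟨i.1.toPresheaf, i.2.1⟩, fun i => i.2.2, ?_⟩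
  intro Mdl h
  have hM : Presieve.IsSheaf J (τ.op ⋙ Mdl.obj) := Mdl.property
  choose e he using fun t : Tᵒᵖ => exists_injection J τ hM h.hom (unop t)
  obtain ⟨d, iso⟩ := transportData (gensubPresheaf J τ h.hom) e he
  have hd : Presieve.IsSheaf J (τ.op ⋙ d.toPresheaf) :=
    Presieve.isSheaf_iso J (Functor.isoWhiskerLeft τ.op iso).symm (isSheaf_gensubPresheaf J τ hM h.hom)
  refine ⟨⟨d, hd, ⟨gensubFactor J τ h.hom ≫ Functor.whiskerLeft τ.op iso.inv⟩⟩,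
    ObjectProperty.homMk (iso.hom ≫ gensubIncl J τ h.hom : d.toPresheaf ⟶ Mdl.obj), ?_⟩
  apply Sheaf.hom_ext
  show (gensubFactor J τ h.hom ≫ Functor.whiskerLeft τ.op iso.inv) ≫
      Functor.whiskerLeft τ.op (iso.hom ≫ gensubIncl J τ h.hom) = h.hom
  rw [Functor.whiskerLeft_comp, Category.assoc, ← Category.assoc (Functor.whiskerLeft τ.op iso.inv),
    ← Functor.whiskerLeft_comp, iso.inv_hom_id, Functor.whiskerLeft_id', Category.id_comp]
  exact gensubFactor_comp J τ h.hom

end LintonAux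

/-- For a Linton theory `τ : C ⥤ T` over a site `(C, J)`, the forgetful
functor `U : Mod^T ⥤ Sh(C, J)` admits a left adjoint (the free model functor). -/
theorem lintonForget_isRightAdjoint : (lintonForget J τ).IsRightAdjoint :=
  isRightAdjoint_of_preservesLimits_of_solutionSetCondition _
    (LintonAux.solutionSetCondition J τ)
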